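/- arXiv:2103.01402 — 2 statements merged into one kernel-verified Lean document; each statement's English description precedes it below -/
import Mathlib

section
/- Let G be a finite simple graph and v a vertex of G. Then φ(G) ≤ φ(G − v) + φ(G − N[v]) + Σ_{u ∈ N(v)} φ(G − (N[v] ∪ N[u])), where the sum is over all neighbors u of v. -/
open SimpleGraph Finset

/-- `F` is a dissociation set of `G`: the induced subgraph `G[F]` has maximum degree at most 1,
i.e. every vertex of `F` has at most one neighbor inside `F`. -/
def IsDissocSet {V : Type*} (G : SimpleGraph V) (F : Set V) : Prop :=
  ∀ v ∈ F, ({u ∈ F | G.Adj v u} : Set V).ncard ≤ 1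

/-- A maximal dissociation set: a dissociation set not properly contained in any other
dissociation set. -/
def IsMaximalDissocSet {V : Type*} (G : SimpleGraph V) (F : Set V) : Prop :=
  IsDissocSet G F ∧ ∀ F' : Set V, IsDissocSet G F' → F ⊆ F' → F = F'

/-- `φ(G)`: the number of maximal dissociation sets of `G`. -/
noncomputable def numMaximalDissoc {V : Type*} (G : SimpleGraph V) : ℕ :=
  Set.ncard {F : Set V | IsMaximalDissocSet G F}

/-- `φ(G − S)`: the number of maximal dissociation sets of the subgraph of `G`
induced on the complement of `S`. -/
noncomputable def phiDel {V : Type*} (G : SimpleGraph V) (S : Set V) : ℕ :=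
  numMaximalDissoc (G.induce Sᶜ)

section Helpers

variable {V : Type*} [Fintype V] {G : SimpleGraph V}

lemma dissoc_mono {F F' : Set V} (h : IsDissocSet G F) (hsub : F' ⊆ F) :
    IsDissocSet G F' := by
  intro w hw
  refine le_trans (Set.ncard_le_ncard ?_ (Set.toFinite _)) (h w (hsub hw))
  exact fun x hx => ⟨hsub hx.1, hx.2⟩

omit [Fintype V] in
lemma dissoc_induce_iff {s : Set V} {D : Set s} :
    IsDissocSet (G.induce s) D ↔ IsDissocSet G (Subtype.val '' D) := by
  have key : ∀ w : s, {u ∈ Subtype.val '' D | G.Adj ↑w u}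
      = Subtype.val '' {u ∈ D | (G.induce s).Adj w u} := by
    intro w
    ext x
    constructor
    · rintro ⟨⟨y, hy, rfl⟩, hadj⟩
      exact ⟨y, ⟨hy, hadj⟩, rfl⟩
    · rintro ⟨y, ⟨hy, hadj⟩, rfl⟩
      exact ⟨⟨y, hy, rfl⟩, hadj⟩
  constructor
  · rintro h _ ⟨w, hw, rfl⟩
    rw [key w, Set.ncard_image_of_injective _ Subtype.val_injective]
    exact h w hw
  · intro h w hw
    have := h w ⟨w, hw, rfl⟩
    rwa [key w, Set.ncard_image_of_injective _ Subtype.val_injective] at this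

lemma count_trace_le (S T : Set V)
    (compat : ∀ D : Set V, D ⊆ Sᶜ → IsDissocSet G D → IsDissocSet G (T ∪ D)) :
    {F : Set V | IsMaximalDissocSet G F ∧ F ∩ S = T}.ncard ≤ phiDel G S := by
  have himg : ∀ F : Set V, Subtype.val '' (Subtype.val ⁻¹' F : Set ↥Sᶜ) = F ∩ Sᶜ := by
    intro F
    rw [Set.image_preimage_eq_inter_range, Subtype.range_val]
  apply Set.ncard_le_ncard_of_injOn (fun F => (Subtype.val ⁻¹' F : Set ↥Sᶜ))
  · rintro F ⟨⟨hF1, hF2⟩, htrace⟩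
    constructor
    · rw [dissoc_induce_iff, himg]
      exact dissoc_mono hF1 Set.inter_subset_left
    · intro D' hD' hsub
      have hE : IsDissocSet G (Subtype.val '' D') := dissoc_induce_iff.mp hD'
      have hEsub : (Subtype.val '' D' : Set V) ⊆ Sᶜ := by
        rintro _ ⟨x, _, rfl⟩; exact x.2
      have hTE := compat _ hEsub hE
      have hFsub : F ⊆ T ∪ Subtype.val '' D' := by
        intro x hx
        by_cases hxS : x ∈ S
        · exact Or.inl (htrace ▸ ⟨hx, hxS⟩)
        · exact Or.inr ⟨⟨x, hxS⟩, hsub hx, rfl⟩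
      have hFeq := hF2 _ hTE hFsub
      refine Set.Subset.antisymm hsub fun x hx => ?_
      show (x : V) ∈ F
      rw [hFeq]
      exact Or.inr ⟨x, hx, rfl⟩
  · intro F hF F' hF' heq
    have key : ∀ F₀ : Set V, F₀ ∩ S = T →
        F₀ = T ∪ Subtype.val '' (Subtype.val ⁻¹' F₀ : Set ↥Sᶜ) := by
      intro F₀ h
      rw [himg, ← h, Set.inter_union_compl]
    rw [key F hF.2, key F' hF'.2,
      show (Subtype.val ⁻¹' F : Set ↥Sᶜ) = Subtype.val ⁻¹' F' from heq]

lemma ncard_biUnion_le {α β : Type*} [Fintype β] (s : Finset α) (f : α → Set β) :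
    (⋃ i ∈ s, f i).ncard ≤ ∑ i ∈ s, (f i).ncard := by
  classical
  induction s using Finset.induction_on with
  | empty => simp
  | insert x s hx ih =>
      rw [Finset.set_biUnion_insert, Finset.sum_insert hx]
      exact le_trans (Set.ncard_union_le _ _) (add_le_add_right ih _)

end Helpers

theorem numMaximalDissoc_le_rec {V : Type*} [Fintype V] (G : SimpleGraph V)
    [DecidableRel G.Adj] (v : V) :
    numMaximalDissoc G ≤
      phiDel G {v} + phiDel G (insert v (G.neighborSet v)) +
        ∑ u ∈ G.neighborFinset v,
          phiDel G (insert v (G.neighborSet v) ∪ insert u (G.neighborSet u)) := by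
  classical
  set Nv : Set V := insert v (G.neighborSet v) with hNv
  set M1 := {F : Set V | IsMaximalDissocSet G F ∧ F ∩ {v} = (∅ : Set V)} with hM1
  set M2 := {F : Set V | IsMaximalDissocSet G F ∧ F ∩ Nv = {v}} with hM2
  set M3 := fun u => {F : Set V | IsMaximalDissocSet G F ∧
    F ∩ (Nv ∪ insert u (G.neighborSet u)) = {v, u}} with hM3
  -- cover
  have cover : {F : Set V | IsMaximalDissocSet G F} ⊆
      (M1 ∪ M2) ∪ ⋃ u ∈ G.neighborFinset v, M3 u := by
    intro F hF
    have hFd := hF.1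
    by_cases hvF : v ∈ F
    · by_cases hN : ∃ u ∈ G.neighborSet v, u ∈ F
      · obtain ⟨u, hun, huF⟩ := hN
        have huv : G.Adj v u := hun
        refine Or.inr (Set.mem_iUnion₂.mpr ⟨u, (G.mem_neighborFinset v u).mpr hun, hF, ?_⟩)
        apply Set.Subset.antisymm
        · rintro x ⟨hxF, hxS⟩
          by_cases hxv : x = v
          · exact Or.inl hxv
          by_cases hxu : x = u
          · exact Or.inr hxu
          exfalso
          rcases hxS with hxNv | hxNu
          · rcases hxNv with rfl | hxn
            · exact hxv rfl
            · have hsub : ({u, x} : Set V) ⊆ {y ∈ F | G.Adj v y} := by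
                rintro y (rfl | rfl)
                · exact ⟨huF, huv⟩
                · exact ⟨hxF, hxn⟩
              have h2 := Set.ncard_le_ncard hsub (Set.toFinite _)
              rw [Set.ncard_pair (fun h => hxu h.symm)] at h2
              exact absurd (le_trans h2 (hFd v hvF)) (by norm_num)
          · rcases hxNu with rfl | hxn
            · exact hxu rfl
            · have hsub : ({v, x} : Set V) ⊆ {y ∈ F | G.Adj u y} := by
                rintro y (rfl | rfl)
                · exact ⟨hvF, huv.symm⟩
                · exact ⟨hxF, hxn⟩
              have h2 := Set.ncard_le_ncard hsub (Set.toFinite _)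
              rw [Set.ncard_pair (fun h => hxv h.symm)] at h2
              exact absurd (le_trans h2 (hFd u huF)) (by norm_num)
        · rintro x (rfl | rfl)
          · exact ⟨hvF, Set.mem_union_left _ (Set.mem_insert _ _)⟩
          · exact ⟨huF, Set.mem_union_left _ (Set.mem_insert_of_mem _ hun)⟩
      · push_neg at hN
        refine Or.inl (Or.inr ⟨hF, Set.Subset.antisymm ?_ ?_⟩)
        · rintro x ⟨hxF, rfl | hxn⟩
          · rfl
          · exact absurd hxF (hN x hxn)
        · rintro x rfl
          exact ⟨hvF, Or.inl rfl⟩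
    · refine Or.inl (Or.inl ⟨hF, ?_⟩)
      ext x
      simp only [Set.mem_inter_iff, Set.mem_singleton_iff, Set.mem_empty_iff_false, iff_false,
        not_and]
      rintro hxF rfl
      exact hvF hxF
  -- bounds
  have b1 : M1.ncard ≤ phiDel G {v} :=
    count_trace_le {v} ∅ (fun D _ hD => by simpa using hD)
  have b2 : M2.ncard ≤ phiDel G Nv := by
    apply count_trace_le Nv {v}
    intro D hDsub hD
    have hDnv : ∀ x ∈ D, ¬ G.Adj v x := fun x hx hadj => hDsub hx (Or.inr hadj)
    rintro w (rfl | hwD)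
    · have : {x ∈ ({w} : Set V) ∪ D | G.Adj w x} = ∅ := by
        ext x
        simp only [Set.mem_setOf_eq, Set.mem_union, Set.mem_singleton_iff,
          Set.mem_empty_iff_false, iff_false, not_and]
        rintro (rfl | hx)
        · exact fun h => G.irrefl h
        · exact hDnv x hx
      rw [this]
      simp
    · have : {x ∈ ({v} : Set V) ∪ D | G.Adj w x} = {x ∈ D | G.Adj w x} := by
        ext x
        constructor
        · rintro ⟨rfl | hx, hadj⟩
          · exact absurd hadj.symm (hDnv w hwD)
          · exact ⟨hx, hadj⟩
        · rintro ⟨hx, hadj⟩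
          exact ⟨Or.inr hx, hadj⟩
      rw [this]
      exact hD w hwD
  have b3 : ∀ u ∈ G.neighborFinset v,
      (M3 u).ncard ≤ phiDel G (Nv ∪ insert u (G.neighborSet u)) := by
    intro u hu
    have huv : G.Adj v u := (G.mem_neighborFinset v u).mp hu
    apply count_trace_le (Nv ∪ insert u (G.neighborSet u)) {v, u}
    intro D hDsub hD
    have hDn : ∀ x ∈ D, ¬ G.Adj v x ∧ ¬ G.Adj u x := by
      intro x hx
      have h := hDsub hx
      constructor
      · exact fun hadj => h (Or.inl (Set.mem_insert_of_mem _ hadj))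
      · exact fun hadj => h (Or.inr (Set.mem_insert_of_mem _ hadj))
    rintro w ((rfl | rfl) | hwD)
    · have : {x ∈ ({w, u} : Set V) ∪ D | G.Adj w x} = {u} := by
        ext x
        constructor
        · rintro ⟨(rfl | rfl) | hx, hadj⟩
          · exact absurd hadj (G.irrefl)
          · rfl
          · exact absurd hadj (hDn x hx).1
        · rintro rfl
          exact ⟨Or.inl (Or.inr rfl), huv⟩
      rw [this, Set.ncard_singleton]
    · have : {x ∈ ({v, w} : Set V) ∪ D | G.Adj w x} = {v} := by
        ext x
        constructor
        · rintro ⟨(rfl | rfl) | hx, hadj⟩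
          · rfl
          · exact absurd hadj (G.irrefl)
          · exact absurd hadj (hDn x hx).2
        · rintro rfl
          exact ⟨Or.inl (Or.inl rfl), huv.symm⟩
      rw [this, Set.ncard_singleton]
    · have : {x ∈ ({v, u} : Set V) ∪ D | G.Adj w x} = {x ∈ D | G.Adj w x} := by
        ext x
        constructor
        · rintro ⟨(rfl | rfl) | hx, hadj⟩
          · exact absurd hadj.symm (hDn w hwD).1
          · exact absurd hadj.symm (hDn w hwD).2
          · exact ⟨hx, hadj⟩
        · rintro ⟨hx, hadj⟩
          exact ⟨Or.inr hx, hadj⟩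
      rw [this]
      exact hD w hwD
  calc numMaximalDissoc G
      ≤ ((M1 ∪ M2) ∪ ⋃ u ∈ G.neighborFinset v, M3 u).ncard :=
        Set.ncard_le_ncard cover (Set.toFinite _)
    _ ≤ (M1 ∪ M2).ncard + (⋃ u ∈ G.neighborFinset v, M3 u).ncard := Set.ncard_union_le _ _
    _ ≤ (M1.ncard + M2.ncard) + ∑ u ∈ G.neighborFinset v, (M3 u).ncard :=
        add_le_add (Set.ncard_union_le _ _) (ncard_biUnion_le _ _)
    _ ≤ _ := add_le_add (add_le_add b1 b2) (Finset.sum_le_sum b3)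
end

section
/- For every n ≥ 1, the number of maximal dissociation sets of the path P_n on n vertices satisfies φ(P_n) < 0.81 · 6^(n/4). -/
open SimpleGraph Finset

namespace DissocAux


abbrev St := Option (Fin 3 × Bool × Bool × Bool × Bool)

def knext : Fin 3 → Fin 3
  | 0 => 1
  | 1 => 2
  | 2 => 2

def stInit : St := some (0, false, false, false, false)

def stepSt : St → Bool → St
  | none, _ => none
  | some (k, b1, b2, b3, b4), x =>
    if (b3 && b4 && x) = true then none
    else if k = 2 ∧ (b3 || (b1 && b2) || (b2 && b4) || (b4 && x)) = false then none
    else some (knext k, b2, b3, b4, x)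

def acceptSt : St → Bool
  | none => false
  | some (k, b1, b2, b3, b4) =>
    (if k = 2 then b3 || (b1 && b2) || (b2 && b4) else true) &&
    (if k = 0 then true else b4 || (b2 && b3))

def cnt : St → ℕ → ℕ
  | σ, 0 => if acceptSt σ then 1 else 0
  | σ, m+1 => cnt (stepSt σ false) m + cnt (stepSt σ true) m

def cVal : St → ℕ
  | none => 0
  | some (k, b1, b2, b3, b4) =>
    if b4 then (if b3 then 10000 else if k = 2 ∧ b2 = false then 6411 else 10883)
    else if b3 then (if k ≠ 0 ∧ b2 = false then 6977 else 10000)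
    else if k = 0 then 10000 else if k = 1 then 4110
    else if b1 && b2 then 4110 else 0

lemma cVal_accept : ∀ σ : St, acceptSt σ = true → 10000 ≤ cVal σ := by decide

lemma cVal_step : ∀ σ : St, 25 * (cVal (stepSt σ false) + cVal (stepSt σ true)) ≤ 39 * cVal σ := by
  decide

lemma cnt_none : ∀ m, cnt none m = 0
  | 0 => rfl
  | m+1 => by simp [cnt, stepSt, cnt_none m]

lemma cnt_le : ∀ (m : ℕ) (σ : St), (cnt σ m : ℝ) ≤ (cVal σ : ℝ) / 10000 * (39/25)^m := by
  intro m
  induction m with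
  | zero =>
    intro σ
    simp only [cnt, pow_zero, mul_one]
    split
    · next h =>
      have := cVal_accept σ h
      rw [Nat.cast_one, le_div_iff₀ (by norm_num)]
      exact_mod_cast by linarith [this]
    · simp only [Nat.cast_zero]
      positivity
  | succ m ih =>
    intro σ
    have h := cVal_step σ
    have h' : (25 : ℝ) * ((cVal (stepSt σ false) : ℝ) + cVal (stepSt σ true)) ≤ 39 * cVal σ := by
      exact_mod_cast h
    have e : cnt σ (m+1) = cnt (stepSt σ false) m + cnt (stepSt σ true) m := rfl
    rw [e, Nat.cast_add]
    calc (cnt (stepSt σ false) m : ℝ) + cnt (stepSt σ true) m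
        ≤ (cVal (stepSt σ false) : ℝ) / 10000 * (39/25)^m
          + (cVal (stepSt σ true) : ℝ) / 10000 * (39/25)^m := add_le_add (ih _) (ih _)
      _ = ((cVal (stepSt σ false) : ℝ) + cVal (stepSt σ true)) / 10000 * (39/25)^m := by ring
      _ ≤ (39/25) * ((cVal σ : ℝ)) / 10000 * (39/25)^m := by
          have hp : (0:ℝ) ≤ (39/25)^m := by positivity
          apply mul_le_mul_of_nonneg_right _ hp
          rw [div_le_div_iff₀ (by norm_num) (by norm_num)]
          nlinarith [h']
      _ = (cVal σ : ℝ) / 10000 * (39/25)^(m+1) := by ring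

lemma cnt_init_le (m : ℕ) : (cnt stInit (m+4) : ℝ) ≤ (4197/1000 : ℝ) * (39/25)^m := by
  have e : cnt stInit (m+4) =
    ((((cnt none m + cnt none m) + (cnt none m + cnt none m)) + ((cnt none m + cnt none m) +
    (cnt (some (2, false, true, true, false)) m + cnt none m))) + (((cnt none m + cnt none m) +
    (cnt (some (2, true, false, true, false)) m + cnt (some (2, true, false, true, true)) m)) +
    ((cnt (some (2, true, true, false, false)) m + cnt (some (2, true, true, false, true)) m) +
    (cnt none m + cnt none m)))) := rfl
  have h1 := cnt_le m (some (2, false, true, true, false))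
  have h2 := cnt_le m (some (2, true, false, true, false))
  have h3 := cnt_le m (some (2, true, false, true, true))
  have h4 := cnt_le m (some (2, true, true, false, false))
  have h5 := cnt_le m (some (2, true, true, false, true))
  norm_num [cVal, show ((2:Fin 3) = 0) ↔ False from by decide] at h1 h2 h3 h4 h5
  rw [e, cnt_none]
  push_cast
  linarith

lemma cnt_bound {n : ℕ} (hn : 1 ≤ n) : (cnt stInit n : ℝ) ≤ (81/100) * (39/25)^n := by
  match n, hn with
  | 1, _ => norm_num [show cnt stInit 1 = 1 from rfl]
  | 2, _ => norm_num [show cnt stInit 2 = 1 from rfl]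
  | 3, _ => norm_num [show cnt stInit 3 = 3 from rfl]
  | (m+4), _ =>
    calc (cnt stInit (m+4) : ℝ) ≤ (4197/1000 : ℝ) * (39/25)^m := cnt_init_le m
      _ ≤ (81/100) * (39/25)^(m+4) := by
          rw [pow_add]
          nlinarith [pow_nonneg (show (0:ℝ) ≤ 39/25 by norm_num) m]

def pad (g : ℕ → Bool) (i d : ℕ) : Bool := if 1 ≤ d ∧ d ≤ i then g (i - d) else false

def kOf (i : ℕ) : Fin 3 := if i = 0 then 0 else if i = 1 then 1 else 2

def stOf (g : ℕ → Bool) (i : ℕ) : St :=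
  some (kOf i, pad g i 4, pad g i 3, pad g i 2, pad g i 1)

def runA (g : ℕ → Bool) : ℕ → St
  | 0 => stInit
  | i+1 => stepSt (runA g i) (g i)

def J (g : ℕ → Bool) (t : ℕ) : Prop :=
  (g (t+1) = true ∧ g (t+2) = true) ∨ (0 < t ∧ g (t-1) = true ∧ g (t+1) = true) ∨
    (1 < t ∧ g (t-2) = true ∧ g (t-1) = true)

def C (g : ℕ → Bool) (i : ℕ) : Prop :=
  (∀ t, t + 2 < i → ¬(g t = true ∧ g (t+1) = true ∧ g (t+2) = true)) ∧
  (∀ t, t + 2 < i → g t = false → J g t)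

def GoodG (g : ℕ → Bool) (n : ℕ) : Prop :=
  (∀ t, ¬(g t = true ∧ g (t+1) = true ∧ g (t+2) = true)) ∧
  (∀ t, t < n → g t = false → J g t)

lemma pad_eq {g : ℕ → Bool} {i d : ℕ} (h1 : 1 ≤ d) (h2 : d ≤ i) : pad g i d = g (i - d) :=
  if_pos ⟨h1, h2⟩

lemma pad_big {g : ℕ → Bool} {i d : ℕ} (h : i < d) : pad g i d = false :=
  if_neg (by omega)

lemma pad_true {g : ℕ → Bool} {i d : ℕ} (h : pad g i d = true) :
    1 ≤ d ∧ d ≤ i ∧ g (i - d) = true := by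
  by_cases hc : 1 ≤ d ∧ d ≤ i
  · exact ⟨hc.1, hc.2, by rwa [pad_eq hc.1 hc.2] at h⟩
  · rw [pad, if_neg hc] at h; exact absurd h (by simp)

lemma pad_succ {g : ℕ → Bool} {i d : ℕ} (h1 : 1 ≤ d) : pad g (i+1) (d+1) = pad g i d := by
  unfold pad
  split_ifs <;> first | rfl | (congr 1; omega) | (exfalso; omega)

lemma pad_one {g : ℕ → Bool} {i : ℕ} : pad g (i+1) 1 = g i := by
  have h := pad_eq (g:=g) (i:=i+1) (d:=1) le_rfl (by omega)
  simpa using h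

lemma knext_kOf (i : ℕ) : knext (kOf i) = kOf (i+1) := by
  rcases i with _ | _ | i <;> simp [kOf, knext]

lemma kOf_eq_two {i : ℕ} : kOf i = 2 ↔ 2 ≤ i := by
  rcases i with _ | _ | i <;> simp [kOf]

lemma kOf_eq_zero {i : ℕ} : kOf i = 0 ↔ i = 0 := by
  rcases i with _ | _ | i <;> simp [kOf]

lemma C_zero (g : ℕ → Bool) : C g 0 := ⟨fun t ht => by omega, fun t ht => by omega⟩

lemma C_mono {g : ℕ → Bool} {i : ℕ} (h : C g (i+1)) : C g i :=
  ⟨fun t ht => h.1 t (by omega), fun t ht => h.2 t (by omega)⟩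


/-- the key local equivalence -/
lemma C_succ_iff (g : ℕ → Bool) (i : ℕ) :
    C g (i+1) ↔ C g i ∧ ¬(pad g i 2 = true ∧ pad g i 1 = true ∧ g i = true) ∧
      ¬(2 ≤ i ∧ ¬(pad g i 2 = true ∨ (pad g i 4 = true ∧ pad g i 3 = true) ∨
        (pad g i 3 = true ∧ pad g i 1 = true) ∨ (pad g i 1 = true ∧ g i = true))) := by
  constructor
  · intro h
    refine ⟨C_mono h, ?_, ?_⟩
    · rintro ⟨h2, h1, hx⟩
      obtain ⟨-, hd2, hg2⟩ := pad_true h2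
      obtain ⟨-, hd1, hg1⟩ := pad_true h1
      refine h.1 (i-2) (by omega) ⟨hg2, ?_, ?_⟩
      · rw [show i - 2 + 1 = i - 1 from by omega]; exact hg1
      · rw [show i - 2 + 2 = i from by omega]; exact hx
    · rintro ⟨h2i, hnot⟩
      by_cases hg2 : g (i-2) = true
      · exact hnot (Or.inl (by rw [pad_eq (by omega) h2i]; exact hg2))
      have hJ := h.2 (i-2) (by omega) (by simpa using hg2)
      apply hnot
      rcases hJ with ⟨ha, hb⟩ | ⟨ht, ha, hb⟩ | ⟨ht, ha, hb⟩
      · rw [show i - 2 + 1 = i - 1 from by omega] at ha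
        rw [show i - 2 + 2 = i from by omega] at hb
        exact Or.inr (Or.inr (Or.inr ⟨by rwa [pad_eq (by omega) (by omega)], hb⟩))
      · rw [show i - 2 - 1 = i - 3 from by omega] at ha
        rw [show i - 2 + 1 = i - 1 from by omega] at hb
        refine Or.inr (Or.inr (Or.inl ⟨?_, ?_⟩)) <;> rw [pad_eq (by omega) (by omega)]
        · exact ha
        · exact hb
      · rw [show i - 2 - 2 = i - 4 from by omega] at ha
        rw [show i - 2 - 1 = i - 3 from by omega] at hb
        refine Or.inr (Or.inl ⟨?_, ?_⟩) <;> rw [pad_eq (by omega) (by omega)]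
        · exact ha
        · exact hb
  · rintro ⟨hC, hd1, hd2⟩
    constructor
    · intro t ht
      rcases Nat.lt_or_ge (t+2) i with h' | h'
      · exact hC.1 t h'
      · have hti : t + 2 = i := by omega
        rintro ⟨ha, hb, hc⟩
        exact hd1 ⟨by rw [pad_eq (by omega) (by omega), show i - 2 = t from by omega]; exact ha,
          by rw [pad_eq (by omega) (by omega), show i - 1 = t + 1 from by omega]; exact hb,
          by rw [show i = t + 2 from by omega]; exact hc⟩
    · intro t ht hgf
      rcases Nat.lt_or_ge (t+2) i with h' | h'
      · exact hC.2 t h' hgf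
      have hti : t + 2 = i := by omega
      have hdis : pad g i 2 = true ∨ (pad g i 4 = true ∧ pad g i 3 = true) ∨
          (pad g i 3 = true ∧ pad g i 1 = true) ∨ (pad g i 1 = true ∧ g i = true) := by
        by_contra hno
        exact hd2 ⟨by omega, hno⟩
      rcases hdis with h2 | ⟨h4, h3⟩ | ⟨h3, h1⟩ | ⟨h1, hx⟩
      · obtain ⟨-, -, hg⟩ := pad_true h2
        rw [show i - 2 = t from by omega] at hg
        rw [hgf] at hg
        exact absurd hg (by simp)
      · obtain ⟨-, hd4, hg4⟩ := pad_true h4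
        obtain ⟨-, -, hg3⟩ := pad_true h3
        refine Or.inr (Or.inr ⟨by omega, ?_, ?_⟩)
        · rw [show t - 2 = i - 4 from by omega]; exact hg4
        · rw [show t - 1 = i - 3 from by omega]; exact hg3
      · obtain ⟨-, hd3, hg3⟩ := pad_true h3
        obtain ⟨-, -, hg1⟩ := pad_true h1
        refine Or.inr (Or.inl ⟨by omega, ?_, ?_⟩)
        · rw [show t - 1 = i - 3 from by omega]; exact hg3
        · rw [show t + 1 = i - 1 from by omega]; exact hg1
      · obtain ⟨-, -, hg1⟩ := pad_true h1
        refine Or.inl ⟨?_, ?_⟩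
        · rw [show t + 1 = i - 1 from by omega]; exact hg1
        · rw [show t + 2 = i from by omega]; exact hx

lemma stOf_zero (g : ℕ → Bool) : stOf g 0 = stInit := by
  simp [stOf, stInit, kOf, pad_big, show (0:ℕ) < 4 from by omega]

lemma stOf_succ (g : ℕ → Bool) (i : ℕ) :
    stOf g (i+1) = some (kOf (i+1), pad g i 3, pad g i 2, pad g i 1, g i) := by
  have h4 : pad g (i+1) 4 = pad g i 3 := pad_succ (by omega)
  have h3 : pad g (i+1) 3 = pad g i 2 := pad_succ (by omega)
  have h2 : pad g (i+1) 2 = pad g i 1 := pad_succ (by omega)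
  have h1 : pad g (i+1) 1 = g i := pad_one
  rw [stOf, h4, h3, h2, h1]

lemma die1_iff (p q x : Bool) : (p && q && x) = true ↔ (p = true ∧ q = true ∧ x = true) := by
  simp [Bool.and_eq_true, and_assoc]

lemma die2_bool_iff (b1 b2 b3 b4 x : Bool) :
    (b3 || (b1 && b2) || (b2 && b4) || (b4 && x)) = false ↔
    ¬(b3 = true ∨ (b1 = true ∧ b2 = true) ∨ (b2 = true ∧ b4 = true) ∨ (b4 = true ∧ x = true)) := by
  cases b1 <;> cases b2 <;> cases b3 <;> cases b4 <;> cases x <;> simp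

lemma run_spec (g : ℕ → Bool) : ∀ i, (C g i ∧ runA g i = stOf g i) ∨ (¬ C g i ∧ runA g i = none)
  | 0 => Or.inl ⟨C_zero g, (stOf_zero g).symm⟩
  | (i+1) => by
    rcases run_spec g i with ⟨hC, hr⟩ | ⟨hC, hr⟩
    · have hrw : runA g (i+1) = stepSt (stOf g i) (g i) := by
        show stepSt (runA g i) (g i) = _
        rw [hr]
      have hstep : stepSt (stOf g i) (g i) =
          if (pad g i 2 && pad g i 1 && g i) = true then none
          else if kOf i = 2 ∧ (pad g i 2 || (pad g i 4 && pad g i 3) || (pad g i 3 && pad g i 1)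
            || (pad g i 1 && g i)) = false then none
          else some (knext (kOf i), pad g i 3, pad g i 2, pad g i 1, g i) := rfl
      by_cases hdie1 : pad g i 2 = true ∧ pad g i 1 = true ∧ g i = true
      · right
        refine ⟨?_, ?_⟩
        · intro h
          rw [C_succ_iff] at h
          exact h.2.1 hdie1
        · rw [hrw, hstep, if_pos ((die1_iff _ _ _).mpr hdie1)]
      by_cases hdie2 : 2 ≤ i ∧ ¬(pad g i 2 = true ∨ (pad g i 4 = true ∧ pad g i 3 = true) ∨
          (pad g i 3 = true ∧ pad g i 1 = true) ∨ (pad g i 1 = true ∧ g i = true))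
      · right
        refine ⟨?_, ?_⟩
        · intro h
          rw [C_succ_iff] at h
          exact h.2.2 hdie2
        · rw [hrw, hstep, if_neg (fun hh => hdie1 ((die1_iff _ _ _).mp hh)),
            if_pos ⟨kOf_eq_two.mpr hdie2.1, (die2_bool_iff _ _ _ _ _).mpr hdie2.2⟩]
      · left
        refine ⟨(C_succ_iff g i).mpr ⟨hC, hdie1, hdie2⟩, ?_⟩
        rw [hrw, hstep, if_neg (fun hh => hdie1 ((die1_iff _ _ _).mp hh)),
          if_neg (fun hh => hdie2 ⟨kOf_eq_two.mp hh.1, (die2_bool_iff _ _ _ _ _).mp hh.2⟩),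
          stOf_succ, knext_kOf]
    · right
      refine ⟨fun hc => hC (C_mono hc), ?_⟩
      show stepSt (runA g i) (g i) = none
      rw [hr]
      rfl

lemma goodG_C {g : ℕ → Bool} {n : ℕ} (h : GoodG g n) : C g n :=
  ⟨fun t _ => h.1 t, fun t ht => h.2 t (by omega)⟩

lemma accept_iff (g : ℕ → Bool) (n : ℕ) (hg : ∀ t, n ≤ t → g t = false) :
    acceptSt (runA g n) = true ↔ GoodG g n := by
  rcases run_spec g n with ⟨hC, hr⟩ | ⟨hC, hr⟩
  · rw [hr]
    show ((if kOf n = 2 then pad g n 2 || (pad g n 4 && pad g n 3) || (pad g n 3 && pad g n 1)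
        else true) &&
      (if kOf n = 0 then true else pad g n 1 || (pad g n 3 && pad g n 2))) = true ↔ _
    rw [Bool.and_eq_true]
    constructor
    · rintro ⟨hA, hB⟩
      constructor
      · intro t
        rintro ⟨ha, hb, hc⟩
        rcases Nat.lt_or_ge (t+2) n with h' | h'
        · exact hC.1 t h' ⟨ha, hb, hc⟩
        · rw [hg (t+2) h'] at hc; exact absurd hc (by simp)
      · intro t htn hgf
        rcases Nat.lt_or_ge (t+2) n with h' | h'
        · exact hC.2 t h' hgf
        rcases Nat.lt_or_ge (t+1) n with h'' | h''
        · -- t = n - 2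
          have htn2 : t + 2 = n := by omega
          rw [if_pos (kOf_eq_two.mpr (by omega))] at hA
          simp only [Bool.or_eq_true, Bool.and_eq_true, or_assoc] at hA
          rcases hA with h2 | ⟨h4, h3⟩ | ⟨h3, h1⟩
          · obtain ⟨-, -, hgt⟩ := pad_true h2
            rw [show n - 2 = t from by omega, hgf] at hgt
            exact absurd hgt (by simp)
          · obtain ⟨-, hd4, hg4⟩ := pad_true h4
            obtain ⟨-, -, hg3⟩ := pad_true h3
            refine Or.inr (Or.inr ⟨by omega, ?_, ?_⟩)
            · rw [show t - 2 = n - 4 from by omega]; exact hg4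
            · rw [show t - 1 = n - 3 from by omega]; exact hg3
          · obtain ⟨-, hd3, hg3⟩ := pad_true h3
            obtain ⟨-, -, hg1⟩ := pad_true h1
            refine Or.inr (Or.inl ⟨by omega, ?_, ?_⟩)
            · rw [show t - 1 = n - 3 from by omega]; exact hg3
            · rw [show t + 1 = n - 1 from by omega]; exact hg1
        · -- t = n - 1
          have htn1 : t + 1 = n := by omega
          rw [if_neg (by rw [kOf_eq_zero]; omega)] at hB
          simp only [Bool.or_eq_true, Bool.and_eq_true, or_assoc] at hB
          rcases hB with h1 | ⟨h3, h2⟩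
          · obtain ⟨-, -, hgt⟩ := pad_true h1
            rw [show n - 1 = t from by omega, hgf] at hgt
            exact absurd hgt (by simp)
          · obtain ⟨-, hd3, hg3⟩ := pad_true h3
            obtain ⟨-, -, hg2⟩ := pad_true h2
            refine Or.inr (Or.inr ⟨by omega, ?_, ?_⟩)
            · rw [show t - 2 = n - 3 from by omega]; exact hg3
            · rw [show t - 1 = n - 2 from by omega]; exact hg2
    · intro hGood
      constructor
      · split
        · next hk2 =>
          have hn2 : 2 ≤ n := kOf_eq_two.mp hk2
          by_cases hg2 : g (n-2) = true
          · simp only [Bool.or_eq_true, Bool.and_eq_true, or_assoc]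
            exact Or.inl (by rw [pad_eq (by omega) (by omega)]; exact hg2)
          have hJ := hGood.2 (n-2) (by omega) (by simpa using hg2)
          simp only [Bool.or_eq_true, Bool.and_eq_true, or_assoc]
          rcases hJ with ⟨ha, hb⟩ | ⟨ht, ha, hb⟩ | ⟨ht, ha, hb⟩
          · rw [show n - 2 + 2 = n from by omega, hg n le_rfl] at hb
            exact absurd hb (by simp)
          · rw [show n - 2 - 1 = n - 3 from by omega] at ha
            rw [show n - 2 + 1 = n - 1 from by omega] at hb
            exact Or.inr (Or.inr ⟨by rw [pad_eq (by omega) (by omega)]; exact ha,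
              by rw [pad_eq (by omega) (by omega)]; exact hb⟩)
          · rw [show n - 2 - 2 = n - 4 from by omega] at ha
            rw [show n - 2 - 1 = n - 3 from by omega] at hb
            exact Or.inr (Or.inl ⟨by rw [pad_eq (by omega) (by omega)]; exact ha,
              by rw [pad_eq (by omega) (by omega)]; exact hb⟩)
        · rfl
      · split
        · rfl
        · next hk0 =>
          have hn1 : 1 ≤ n := by
            rcases Nat.eq_zero_or_pos n with h | h
            · exact absurd (by rw [h]; rfl) hk0
            · exact h
          by_cases hg1 : g (n-1) = true
          · simp only [Bool.or_eq_true, Bool.and_eq_true, or_assoc]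
            exact Or.inl (by rw [pad_eq (by omega) (by omega)]; exact hg1)
          have hJ := hGood.2 (n-1) (by omega) (by simpa using hg1)
          simp only [Bool.or_eq_true, Bool.and_eq_true, or_assoc]
          rcases hJ with ⟨ha, hb⟩ | ⟨ht, ha, hb⟩ | ⟨ht, ha, hb⟩
          · rw [show n - 1 + 1 = n from by omega, hg n le_rfl] at ha
            exact absurd ha (by simp)
          · rw [show n - 1 + 1 = n from by omega, hg n le_rfl] at hb
            exact absurd hb (by simp)
          · rw [show n - 1 - 2 = n - 3 from by omega] at ha
            rw [show n - 1 - 1 = n - 2 from by omega] at hb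
            exact Or.inr ⟨by rw [pad_eq (by omega) (by omega)]; exact ha,
              by rw [pad_eq (by omega) (by omega)]; exact hb⟩
  · rw [hr]
    simp only [acceptSt]
    constructor
    · intro h; exact absurd h (by simp)
    · intro h; exact absurd (goodG_C h) hC

lemma runA_eq_foldl (g : ℕ → Bool) : ∀ n, runA g n = List.foldl stepSt stInit ((List.range n).map g)
  | 0 => rfl
  | (n+1) => by
    rw [List.range_succ, List.map_append, List.foldl_append, ← runA_eq_foldl g n]
    rfl

lemma card_accept : ∀ (m : ℕ) (σ : St),
    Nat.card {s : Fin m → Bool // acceptSt (List.foldl stepSt σ (List.ofFn s)) = true} = cnt σ m := by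
  intro m
  induction m with
  | zero =>
    intro σ
    by_cases h : acceptSt σ = true
    · haveI : Unique {s : Fin 0 → Bool // acceptSt (List.foldl stepSt σ (List.ofFn s)) = true} :=
        { default := ⟨fun i => i.elim0, by simpa using h⟩
          uniq := by rintro ⟨s, hs⟩; apply Subtype.ext; funext i; exact i.elim0 }
      rw [Nat.card_unique]
      simp [cnt, h]
    · haveI : IsEmpty {s : Fin 0 → Bool // acceptSt (List.foldl stepSt σ (List.ofFn s)) = true} := by
        constructor; rintro ⟨s, hs⟩; simp only [List.ofFn_zero, List.foldl_nil] at hs; exact h hs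
      rw [Nat.card_of_isEmpty]
      simp [cnt, h]
  | succ m ih =>
    intro σ
    classical
    have e1 : {p : Bool × (Fin m → Bool) //
          acceptSt (List.foldl stepSt (stepSt σ p.1) (List.ofFn p.2)) = true}
        ≃ {s : Fin (m+1) → Bool // acceptSt (List.foldl stepSt σ (List.ofFn s)) = true} := by
      refine Equiv.subtypeEquiv (Fin.consEquiv fun _ => Bool) (fun p => ?_)
      have : List.ofFn ((Fin.consEquiv fun _ => Bool) p) = p.1 :: List.ofFn p.2 := by
        rw [List.ofFn_succ]
        simp [Fin.consEquiv, Fin.cons_zero, Fin.cons_succ]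
      rw [this, List.foldl_cons]
    have e2 : {p : Bool × (Fin m → Bool) //
          acceptSt (List.foldl stepSt (stepSt σ p.1) (List.ofFn p.2)) = true}
        ≃ Σ b : Bool, {t : Fin m → Bool //
            acceptSt (List.foldl stepSt (stepSt σ b) (List.ofFn t)) = true} :=
      Equiv.subtypeProdEquivSigmaSubtype
        (fun b t => acceptSt (List.foldl stepSt (stepSt σ b) (List.ofFn t)) = true)
    rw [← Nat.card_congr e1, Nat.card_congr e2]
    rw [Nat.card_eq_fintype_card, Fintype.card_sigma, Fintype.sum_bool]
    rw [← Nat.card_eq_fintype_card, ← Nat.card_eq_fintype_card, ih, ih,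
      show cnt σ (m+1) = cnt (stepSt σ false) m + cnt (stepSt σ true) m from rfl]
    omega
variable {n : ℕ}

def gOf (s : Fin n → Bool) : ℕ → Bool := fun i => if h : i < n then s ⟨i, h⟩ else false

lemma gOf_lt {s : Fin n → Bool} {i : ℕ} (h : i < n) : gOf s i = s ⟨i, h⟩ := dif_pos h

lemma gOf_ge {s : Fin n → Bool} {i : ℕ} (h : n ≤ i) : gOf s i = false := dif_neg (by omega)

lemma gOf_true {s : Fin n → Bool} {i : ℕ} (h : gOf s i = true) :
    ∃ hi : i < n, s ⟨i, hi⟩ = true := by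
  by_cases hi : i < n
  · exact ⟨hi, by rwa [gOf_lt hi] at h⟩
  · rw [gOf_ge (by omega)] at h
    exact absurd h (by simp)

lemma gOf_fin {s : Fin n → Bool} (a : Fin n) : gOf s a.val = s a := by
  rw [gOf_lt a.isLt]

lemma dissoc_iff (F : Set (Fin n)) :
    IsDissocSet (pathGraph n) F ↔
      ∀ a b c : Fin n, (a:ℕ)+1 = b → (b:ℕ)+1 = c → ¬(a ∈ F ∧ b ∈ F ∧ c ∈ F) := by
  constructor
  · intro h a b c hab hbc
    rintro ⟨ha, hb, hc⟩
    have hb1 := h b hb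
    have hac : a ≠ c := by
      intro he
      rw [he] at hab
      omega
    have h2 : 1 < ({u ∈ F | (pathGraph n).Adj b u} : Set (Fin n)).ncard := by
      rw [Set.one_lt_ncard (Set.toFinite _)]
      refine ⟨a, ⟨ha, ?_⟩, c, ⟨hc, ?_⟩, hac⟩
      · rw [pathGraph_adj]; right; exact hab
      · rw [pathGraph_adj]; left; exact hbc
    omega
  · intro h v hv
    rw [Set.ncard_le_one (Set.toFinite _)]
    rintro a ⟨haF, haA⟩ b ⟨hbF, hbA⟩
    rw [pathGraph_adj] at haA hbA
    rcases haA with ha | ha <;> rcases hbA with hb | hb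
    · exact Fin.ext (by omega)
    · exact absurd ⟨hbF, hv, haF⟩ (h b v a hb ha)
    · exact absurd ⟨haF, hv, hbF⟩ (h a v b ha hb)
    · exact Fin.ext (by omega)

lemma dissoc_mono {V : Type*} [Fintype V] {G : SimpleGraph V} {F F' : Set V}
    (h : IsDissocSet G F') (hsub : F ⊆ F') : IsDissocSet G F := by
  intro v hv
  refine le_trans (Set.ncard_le_ncard ?_ (Set.toFinite _)) (h v (hsub hv))
  rintro u ⟨hu1, hu2⟩
  exact ⟨hsub hu1, hu2⟩

lemma maximal_iff' {V : Type*} [Fintype V] {G : SimpleGraph V} {F : Set V} :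
    IsMaximalDissocSet G F ↔ IsDissocSet G F ∧ ∀ v ∉ F, ¬ IsDissocSet G (insert v F) := by
  constructor
  · rintro ⟨hd, hmax⟩
    refine ⟨hd, fun v hv hins => ?_⟩
    have := hmax (insert v F) hins (Set.subset_insert _ _)
    exact hv (this ▸ Set.mem_insert v F)
  · rintro ⟨hd, hmax⟩
    refine ⟨hd, fun F' hF' hsub => ?_⟩
    by_contra hne
    obtain ⟨v, hvF', hvF⟩ := Set.exists_of_ssubset (ssubset_of_subset_of_ne hsub hne)
    exact hmax v hvF (dissoc_mono hF' (Set.insert_subset hvF' hsub))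

lemma key (s : Fin n → Bool) :
    IsMaximalDissocSet (pathGraph n) {i : Fin n | s i = true} ↔ GoodG (gOf s) n := by
  rw [maximal_iff']
  constructor
  · rintro ⟨hd, hm⟩
    rw [dissoc_iff] at hd
    constructor
    · rintro t ⟨ha, hb, hc⟩
      obtain ⟨hc2, hcs⟩ := gOf_true hc
      obtain ⟨ha2, has⟩ := gOf_true ha
      obtain ⟨hb2, hbs⟩ := gOf_true hb
      exact hd ⟨t, ha2⟩ ⟨t+1, hb2⟩ ⟨t+2, hc2⟩ rfl rfl ⟨has, hbs, hcs⟩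
    · intro t htn hgf
      have hv : (⟨t, htn⟩ : Fin n) ∉ {i : Fin n | s i = true} := by
        simp only [Set.mem_setOf_eq]
        rw [← gOf_lt (s := s) htn, hgf]
        simp
      have hni := hm _ hv
      rw [dissoc_iff] at hni
      push_neg at hni
      obtain ⟨a, b, c, hab, hbc, haF, hbF, hcF⟩ := hni
      rw [Set.mem_insert_iff] at haF hbF hcF
      simp only [Set.mem_setOf_eq] at haF hbF hcF
      have hres : ∀ x : Fin n, (x = ⟨t, htn⟩ ∨ s x = true) → (x:ℕ) ≠ t → s x = true := by
        intro x hx hxt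
        refine hx.resolve_left fun he => hxt ?_
        rw [he]
      by_cases hbt : (b:ℕ) = t
      · have has := hres a haF (by omega)
        have hcs := hres c hcF (by omega)
        refine Or.inr (Or.inl ⟨by omega, ?_, ?_⟩)
        · rw [show t - 1 = (a:ℕ) from by omega, gOf_fin]; exact has
        · rw [show t + 1 = (c:ℕ) from by omega, gOf_fin]; exact hcs
      by_cases hat : (a:ℕ) = t
      · have hbs := hres b hbF (by omega)
        have hcs := hres c hcF (by omega)
        refine Or.inl ⟨?_, ?_⟩
        · rw [show t + 1 = (b:ℕ) from by omega, gOf_fin]; exact hbs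
        · rw [show t + 2 = (c:ℕ) from by omega, gOf_fin]; exact hcs
      by_cases hct : (c:ℕ) = t
      · have has := hres a haF (by omega)
        have hbs := hres b hbF (by omega)
        refine Or.inr (Or.inr ⟨by omega, ?_, ?_⟩)
        · rw [show t - 2 = (a:ℕ) from by omega, gOf_fin]; exact has
        · rw [show t - 1 = (b:ℕ) from by omega, gOf_fin]; exact hbs
      · exact absurd ⟨hres a haF hat, hres b hbF hbt, hres c hcF hct⟩ (hd a b c hab hbc)
  · rintro ⟨hD, hM⟩
    constructor
    · rw [dissoc_iff]
      rintro a b c hab hbc ⟨ha, hb, hc⟩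
      simp only [Set.mem_setOf_eq] at ha hb hc
      refine hD (a : ℕ) ⟨by rw [gOf_fin]; exact ha, ?_, ?_⟩
      · rw [hab, gOf_fin]; exact hb
      · rw [show (a:ℕ) + 2 = (c:ℕ) from by omega, gOf_fin]; exact hc
    · intro v hv hins
      rw [dissoc_iff] at hins
      simp only [Set.mem_setOf_eq] at hv
      have hgf : gOf s (v : ℕ) = false := by
        rw [gOf_fin]
        exact Bool.not_eq_true _ |>.mp hv
      have hJ := hM (v : ℕ) v.isLt hgf
      rcases hJ with ⟨h1, h2⟩ | ⟨ht, h1, h2⟩ | ⟨ht, h1, h2⟩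
      · obtain ⟨hn2, hs2⟩ := gOf_true h2
        obtain ⟨hn1, hs1⟩ := gOf_true h1
        refine hins v ⟨(v:ℕ)+1, hn1⟩ ⟨(v:ℕ)+2, hn2⟩ rfl rfl
          ⟨Set.mem_insert _ _, Set.mem_insert_iff.mpr (Or.inr hs1),
           Set.mem_insert_iff.mpr (Or.inr hs2)⟩
      · obtain ⟨hn1, hs1⟩ := gOf_true h1
        obtain ⟨hn2, hs2⟩ := gOf_true h2
        refine hins ⟨(v:ℕ)-1, hn1⟩ v ⟨(v:ℕ)+1, hn2⟩ (by simp; omega) rfl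
          ⟨Set.mem_insert_iff.mpr (Or.inr hs1), Set.mem_insert _ _,
           Set.mem_insert_iff.mpr (Or.inr hs2)⟩
      · obtain ⟨hn1, hs1⟩ := gOf_true h1
        obtain ⟨hn2, hs2⟩ := gOf_true h2
        refine hins ⟨(v:ℕ)-2, hn1⟩ ⟨(v:ℕ)-1, hn2⟩ v (by simp; omega) (by simp; omega)
          ⟨Set.mem_insert_iff.mpr (Or.inr hs1), Set.mem_insert_iff.mpr (Or.inr hs2),
           Set.mem_insert _ _⟩


lemma decide_mem_setOf (s : Fin n → Bool) (i : Fin n)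
    [inst : Decidable (i ∈ {j : Fin n | s j = true})] :
    @decide (i ∈ {j : Fin n | s j = true}) inst = s i := by
  obtain h | h := Bool.eq_false_or_eq_true (s i)
  · rw [h]
    exact decide_eq_true (show i ∈ {j : Fin n | s j = true} from h)
  · rw [h]
    exact decide_eq_false (fun hc => absurd (h.symm.trans hc) Bool.false_ne_true)

lemma foldl_ofFn (s : Fin n → Bool) :
    List.foldl stepSt stInit (List.ofFn s) = runA (gOf s) n := by
  rw [runA_eq_foldl]
  congr 1
  rw [List.ofFn_eq_map, ← (show (List.finRange n).map Fin.val = List.range n from List.ext_getElem (by simp) (by simp)), List.map_map]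
  exact List.map_congr_left fun a _ => (gOf_fin a).symm

open Classical in
lemma card_eq (n : ℕ) :
    Nat.card {F : Set (Fin n) // IsMaximalDissocSet (pathGraph n) F} = cnt stInit n := by
  rw [← card_accept n stInit]
  apply Nat.card_congr
  have e1 : {s : Fin n → Bool // GoodG (gOf s) n} ≃
      {F : Set (Fin n) // IsMaximalDissocSet (pathGraph n) F} :=
    { toFun := fun s => ⟨{i | s.1 i = true}, (key s.1).mpr s.2⟩
      invFun := fun F => ⟨fun i => decide (i ∈ F.1), by
        have hset : {i : Fin n | decide (i ∈ F.1) = true} = F.1 := by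
          ext i
          simp [decide_eq_true_eq]
        exact (key _).mp (by rw [hset]; exact F.2)⟩
      left_inv := by
        rintro ⟨s, hs⟩
        apply Subtype.ext
        funext i
        show @decide (i ∈ {j : Fin n | s j = true}) (Classical.propDecidable _) = s i
        exact decide_mem_setOf (inst := Classical.propDecidable _) s i
      right_inv := by
        rintro ⟨F, hF⟩
        apply Subtype.ext
        ext i
        simp [decide_eq_true_eq] }
  have e2 : {s : Fin n → Bool // GoodG (gOf s) n} ≃
      {s : Fin n → Bool // acceptSt (List.foldl stepSt stInit (List.ofFn s)) = true} := by
    apply Equiv.subtypeEquivRight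
    intro s
    rw [foldl_ofFn]
    exact (accept_iff (gOf s) n (fun t ht => gOf_ge ht)).symm
  exact e1.symm.trans e2

end DissocAux

theorem numMaximalDissoc_pathGraph (n : ℕ) (hn : 1 ≤ n) :
    (numMaximalDissoc (pathGraph n) : ℝ) < 0.81 * (6 : ℝ) ^ ((n : ℝ) / 4) := by
  classical
  have hcard : numMaximalDissoc (pathGraph n) = DissocAux.cnt DissocAux.stInit n := by
    rw [numMaximalDissoc, ← Nat.card_coe_set_eq, ← DissocAux.card_eq n]
    apply Nat.card_congr
    exact Equiv.subtypeEquivRight fun F => Iff.rfl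
  have h6 : ((39:ℝ)/25) < (6:ℝ) ^ ((1:ℝ)/4) := by
    have h1 : ((39:ℝ)/25) = (((39:ℝ)/25)^(4:ℕ)) ^ ((1:ℝ)/4) := by
      rw [← Real.rpow_natCast ((39:ℝ)/25) 4, ← Real.rpow_mul (by norm_num)]
      norm_num
    rw [h1]
    exact Real.rpow_lt_rpow (by positivity) (by norm_num) (by norm_num)
  have hpow : ((39:ℝ)/25)^n < ((6:ℝ) ^ ((1:ℝ)/4))^n :=
    pow_lt_pow_left₀ h6 (by norm_num) (by omega)
  have hrw : ((6:ℝ) ^ ((1:ℝ)/4))^n = (6:ℝ) ^ ((n:ℝ)/4) := by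
    rw [← Real.rpow_natCast ((6:ℝ) ^ ((1:ℝ)/4)) n, ← Real.rpow_mul (by norm_num)]
    congr 1
    ring
  have hbound := DissocAux.cnt_bound hn
  calc (numMaximalDissoc (pathGraph n) : ℝ)
      = (DissocAux.cnt DissocAux.stInit n : ℝ) := by rw [hcard]
    _ ≤ 81/100 * ((39:ℝ)/25)^n := hbound
    _ < 81/100 * ((6:ℝ) ^ ((1:ℝ)/4))^n := by
        have : (0:ℝ) < 81/100 := by norm_num
        exact (mul_lt_mul_iff_right₀ this).mpr hpow
    _ = 0.81 * (6 : ℝ) ^ ((n : ℝ) / 4) := by rw [hrw]; norm_num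
end
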